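/- arXiv:2009.05253 — 4 statements merged into one kernel-verified Lean document; each statement's English description precedes it below -/
import Mathlib

section
/- Let Δ be an n×n real matrix and h = [[h11, h12],[h12, h22]] a symmetric 2×2 real matrix with h11 < 0. If for every positive semidefinite n×n matrix Λ the inequality [Δᵀ; I]ᵀ (h ⊗ Λ) [Δᵀ; I] ⪰ 0 holds (i.e., h11·ΔΛΔᵀ + h12·(ΔΛ + ΛΔᵀ) + h22·Λ ⪰ 0), then Δ is diagonal, i.e., its off-diagonal entries all vanish. -/
open Matrix

/-- If for every PSD Λ the quadratic multiplier inequality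
`h11·ΔΛΔᵀ + h12·(ΔΛ + ΛΔᵀ) + h22·Λ ⪰ 0` holds with `h11 < 0`,
then `Δ` is diagonal. -/
theorem stmt_0 (n : ℕ) (Δ : Matrix (Fin n) (Fin n) ℝ)
    (h11 h12 h22 : ℝ) (hneg : h11 < 0)
    (hmult : ∀ Λ : Matrix (Fin n) (Fin n) ℝ, Λ.PosSemidef →
      (h11 • (Δ * Λ * Δᵀ) + h12 • (Δ * Λ + Λ * Δᵀ) + h22 • Λ).PosSemidef) :
    ∀ i k : Fin n, i ≠ k → Δ i k = 0 := by
  intro i k hik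
  set E : Matrix (Fin n) (Fin n) ℝ := Matrix.single k k 1 with hE
  have hEpsd : E.PosSemidef := by
    have := Matrix.posSemidef_conjTranspose_mul_self E
    have hEE : Eᴴ * E = E := by
      ext a b
      simp [hE, Matrix.mul_apply, Matrix.single, Matrix.conjTranspose_apply,
        ite_and, Finset.sum_ite_eq]
      split_ifs <;> rfl
    rwa [hEE] at this
  have hM := hmult E hEpsd
  have h2 := hM.dotProduct_mulVec_nonneg (Pi.single i 1)
  have hquad : (Pi.single i (1:ℝ)) ⬝ᵥ
      ((h11 • (Δ * E * Δᵀ) + h12 • (Δ * E + E * Δᵀ) + h22 • E) *ᵥ Pi.single i 1)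
      = h11 * (Δ i k) ^ 2 := by
    simp [hE, Matrix.mulVec_single, dotProduct, Matrix.add_apply, Matrix.smul_apply,
      Matrix.mul_apply, Matrix.single, Matrix.transpose_apply, Pi.single_apply,
      Finset.sum_ite_eq, ite_and, hik, Ne.symm hik]
    left; ring
  simp only [star_trivial] at h2
  rw [hquad] at h2
  have : (Δ i k) ^ 2 ≤ 0 := by nlinarith
  nlinarith [sq_nonneg (Δ i k), this]
end

section
/- Let Δ be an n×n real matrix and h11 < 0, h12, h22 real numbers. If for every positive semidefinite n×n matrix Λ the inequality h11·ΔΛΔᵀ + h12·(ΔΛ + ΛΔᵀ) + h22·Λ ⪰ 0 holds, then Δ = δ·I for some real scalar δ. -/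
open Matrix

private lemma vecMulVec_mulVec' {n : ℕ} (x y w : Fin n → ℝ) :
    vecMulVec x y *ᵥ w = (y ⬝ᵥ w) • x := by
  ext i
  simp [vecMulVec_apply, mulVec, dotProduct, Finset.mul_sum, Pi.smul_apply,
    mul_comm, mul_left_comm, smul_eq_mul]

private lemma vecMulVec_psd {n : ℕ} (x : Fin n → ℝ) : (vecMulVec x x).PosSemidef := by
  rw [posSemidef_iff_dotProduct_mulVec]
  constructor
  · ext i j
    simp [Matrix.IsHermitian, vecMulVec_apply, conjTranspose_apply, mul_comm]
  · intro w
    have h : star w ⬝ᵥ (vecMulVec x x *ᵥ w) = (x ⬝ᵥ w) * (x ⬝ᵥ w) := by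
      rw [vecMulVec_mulVec']
      simp [dotProduct_smul, smul_eq_mul, dotProduct_comm]
    rw [h]
    exact mul_self_nonneg _

/-- If for every PSD Λ the quadratic multiplier inequality
`h11·ΔΛΔᵀ + h12·(ΔΛ + ΛΔᵀ) + h22·Λ ⪰ 0` holds with `h11 < 0`,
then `Δ = δ·I` for some scalar `δ`. -/
theorem stmt_1 (n : ℕ) (Δ : Matrix (Fin n) (Fin n) ℝ)
    (h11 h12 h22 : ℝ) (hneg : h11 < 0)
    (hmult : ∀ Λ : Matrix (Fin n) (Fin n) ℝ, Λ.PosSemidef →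
      (h11 • (Δ * Λ * Δᵀ) + h12 • (Δ * Λ + Λ * Δᵀ) + h22 • Λ).PosSemidef) :
    ∃ δ : ℝ, Δ = δ • (1 : Matrix (Fin n) (Fin n) ℝ) := by
  -- Step 1: orthogonality
  have horth : ∀ x v : Fin n → ℝ, x ⬝ᵥ v = 0 → v ⬝ᵥ (Δ *ᵥ x) = 0 := by
    intro x v hxv
    set a := v ⬝ᵥ (Δ *ᵥ x) with ha
    have hpsd := (hmult (vecMulVec x x) (vecMulVec_psd x)).dotProduct_mulVec_nonneg v
    have hq : star v ⬝ᵥ ((h11 • (Δ * vecMulVec x x * Δᵀ)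
        + h12 • (Δ * vecMulVec x x + vecMulVec x x * Δᵀ)
        + h22 • vecMulVec x x) *ᵥ v) = h11 * (a * a) := by
      have h1 : (Δ * vecMulVec x x * Δᵀ) *ᵥ v = Δ *ᵥ (vecMulVec x x *ᵥ (Δᵀ *ᵥ v)) := by
        rw [← mulVec_mulVec, ← mulVec_mulVec]
      have hxΔv : x ⬝ᵥ (Δᵀ *ᵥ v) = a := by
        rw [ha, dotProduct_mulVec, vecMul_transpose, dotProduct_comm, dotProduct_mulVec,
          ← mulVec_transpose]
      have hvx : v ⬝ᵥ x = 0 := by rw [dotProduct_comm]; exact hxv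
      simp only [add_mulVec, smul_mulVec, dotProduct_add, dotProduct_smul, star_trivial]
      rw [h1, vecMulVec_mulVec', hxΔv, ← mulVec_mulVec, vecMulVec_mulVec', hxv,
        ← mulVec_mulVec, vecMulVec_mulVec', hxΔv]
      simp only [mulVec_smul, dotProduct_smul, smul_eq_mul, zero_smul, dotProduct_zero,
        mulVec_zero, hvx, ← ha]
      ring
    rw [hq] at hpsd
    -- h11 * a^2 ≥ 0, h11 < 0 ⟹ a = 0
    by_contra hane
    have hpos : 0 < a * a := mul_self_pos.mpr hane
    have : h11 * (a * a) < 0 := mul_neg_of_neg_of_pos hneg hpos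
    linarith
  -- Step 2: every vector is an eigenvector
  have heig : ∀ x : Fin n → ℝ, ∃ c : ℝ, Δ *ᵥ x = c • x := by
    intro x
    by_cases hx : x = 0
    · exact ⟨0, by simp [hx]⟩
    · have hxx : x ⬝ᵥ x ≠ 0 := by
        intro h
        apply hx
        ext i
        have := Finset.sum_eq_zero_iff_of_nonneg (fun j _ => mul_self_nonneg (x j)) |>.1 h
        have := this i (Finset.mem_univ i)
        simpa [mul_self_eq_zero] using this
      set y := Δ *ᵥ x with hy
      set c := (x ⬝ᵥ y) / (x ⬝ᵥ x) with hc
      refine ⟨c, ?_⟩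
      set v := y - c • x with hv
      have hxv : x ⬝ᵥ v = 0 := by
        rw [hv, dotProduct_sub, dotProduct_smul, smul_eq_mul, hc]
        field_simp
        ring
      have hvy : v ⬝ᵥ y = 0 := horth x v hxv
      have hvv : v ⬝ᵥ v = 0 := by
        have : v ⬝ᵥ v = v ⬝ᵥ y - c * (v ⬝ᵥ x) := by
          rw [hv]; simp [dotProduct_sub, dotProduct_smul, smul_eq_mul]
        rw [this, hvy, dotProduct_comm, hxv]
        ring
      have hv0 : v = 0 := by
        ext i
        have := Finset.sum_eq_zero_iff_of_nonneg (fun j _ => mul_self_nonneg (v j)) |>.1 hvv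
        have := this i (Finset.mem_univ i)
        simpa [mul_self_eq_zero] using this
      have : y = c • x := by
        have := hv0
        rw [hv] at this
        linear_combination (norm := (ext i; simp)) this
      exact this
  -- Step 3: conclude Δ = δ • 1
  rcases Nat.eq_zero_or_pos n with hn | hn
  · refine ⟨0, ?_⟩
    subst hn
    ext i
    exact absurd i.2 (by omega)
  · obtain ⟨i0⟩ := Fin.pos_iff_nonempty.mp hn
    obtain ⟨c, hc⟩ := heig (Pi.single i0 1)
    refine ⟨c, ?_⟩
    ext i j
    obtain ⟨cj, hcj⟩ := heig (Pi.single j 1)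
    have hcol : ∀ k, Δ k j = cj * (Pi.single j 1 : Fin n → ℝ) k := by
      intro k
      have := congrFun hcj k
      simpa [mulVec_single, Pi.smul_apply, smul_eq_mul] using this
    by_cases hij : i = j
    · subst hij
      -- show Δ i i = c
      by_cases hi0 : i = i0
      · subst hi0
        have := congrFun hc i
        simp [mulVec_single, Pi.single_eq_same, smul_eq_mul] at this
        rw [this]
        simp [Matrix.one_apply]
      · -- use x = single i 1 + single i0 1
        obtain ⟨d, hd⟩ := heig (Pi.single i 1 + Pi.single i0 1)
        have h1 : Δ *ᵥ (Pi.single i 1 + Pi.single i0 1)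
            = Δ *ᵥ Pi.single i 1 + Δ *ᵥ Pi.single i0 1 := by
          rw [mulVec_add]
        obtain ⟨ci, hci⟩ := heig (Pi.single i 1)
        rw [h1, hci, hc] at hd
        have hdi := congrFun hd i
        have hdi0 := congrFun hd i0
        simp [Pi.single_eq_same, Pi.single_eq_of_ne hi0, Pi.single_eq_of_ne (Ne.symm hi0),
          smul_eq_mul] at hdi hdi0
        have hci_eq : ci = c := by rw [hdi, hdi0]
        have := congrFun hci i
        simp [mulVec_single, Pi.single_eq_same, smul_eq_mul] at this
        rw [this, hci_eq]
        simp [Matrix.one_apply, Pi.single_eq_same]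
    · rw [hcol i, Pi.single_eq_of_ne hij]
      simp [Matrix.one_apply, hij]
end

section
/- Let Δ be an n×n real matrix with negative upper-left coefficient constraint: suppose h11 < 0 and for each standard basis vector e_k, the matrix h11·Δe_k e_kᵀΔᵀ + h12·(Δe_k e_kᵀ + e_k e_kᵀΔᵀ) + h22·e_k e_kᵀ is positive semidefinite. Then for all indices i ≠ k, the (i,k) entry of Δ is zero. -/
open Matrix

/-- If `h11 < 0` and for each standard basis vector `e_k` the matrix
`h11·Δe_k e_kᵀΔᵀ + h12·(Δe_k e_kᵀ + e_k e_kᵀΔᵀ) + h22·e_k e_kᵀ` is PSD,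
then the off-diagonal entries of `Δ` vanish. -/
theorem stmt_2 (n : ℕ) (Δ : Matrix (Fin n) (Fin n) ℝ)
    (h11 h12 h22 : ℝ) (hneg : h11 < 0)
    (hmult : ∀ k : Fin n,
      (h11 • (Δ * Matrix.single k k (1 : ℝ) * Δᵀ)
        + h12 • (Δ * Matrix.single k k (1 : ℝ)
            + Matrix.single k k (1 : ℝ) * Δᵀ)
        + h22 • Matrix.single k k (1 : ℝ)).PosSemidef) :
    ∀ i k : Fin n, i ≠ k → Δ i k = 0 := by
  intro i k hik
  have h := (hmult k).dotProduct_mulVec_nonneg (Pi.single i 1)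
  simp [dotProduct, Matrix.mulVec, Matrix.mul_apply, Matrix.single,
    Matrix.transpose_apply, Pi.single_apply, ite_and, Finset.sum_ite_eq, Finset.sum_ite_eq',
    hik, Ne.symm hik] at h
  by_contra hne
  have hp : 0 < Δ i k * Δ i k := mul_self_pos.mpr hne
  nlinarith
end

section
/- Let Q be an n×n negative definite symmetric real matrix, B an n×m real matrix, and T an n×p real matrix. Suppose that for every v ∈ ℝⁿ with Bᵀv = 0 one has vᵀ T Q Tᵀ v ≥ 0. Then Tᵀv = 0 for every v with Bᵀv = 0; consequently the column space of T is contained in the column space of B, i.e., T = B·Δ for some m×p matrix Δ. -/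
open Matrix

/-- Factoring a linear map through another when kernels are nested (over a field). -/
lemma factor_through {K V W U : Type*} [Field K] [AddCommGroup V] [AddCommGroup W]
    [AddCommGroup U] [Module K V] [Module K W] [Module K U]
    (g : V →ₗ[K] W) (f : V →ₗ[K] U) (hk : LinearMap.ker g ≤ LinearMap.ker f) :
    ∃ h : W →ₗ[K] U, f = h.comp g := by
  set e := g.quotKerEquivRange
  set fbar : (V ⧸ LinearMap.ker g) →ₗ[K] U := (LinearMap.ker g).liftQ f hk
  obtain ⟨h, hh⟩ := LinearMap.exists_extend (fbar.comp (e.symm : LinearMap.range g →ₗ[K] V ⧸ LinearMap.ker g))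
  refine ⟨h, ?_⟩
  ext x
  have hx : g x ∈ LinearMap.range g := ⟨x, rfl⟩
  have h1 : h (g x) = fbar (e.symm ⟨g x, hx⟩) := by
    have := congrArg (fun φ => φ ⟨g x, hx⟩) hh
    simpa using this
  have h2 : e.symm ⟨g x, hx⟩ = Submodule.Quotient.mk x := by
    apply e.injective
    simp only [LinearEquiv.apply_symm_apply]
    rfl
  simp [LinearMap.comp_apply, h1, h2, fbar, Submodule.liftQ_apply]

/-- If `Q` is negative definite and `vᵀ T Q Tᵀ v ≥ 0` for all `v` with `Bᵀv = 0`,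
then `Tᵀv = 0` for all such `v`, and consequently `T = B·Δ` for some `Δ`.
(For `T Q Tᵀ` to be well-defined with `T : n×p`, the matrix `Q` is `p×p`.) -/
theorem stmt_3 (n m p : ℕ)
    (Q : Matrix (Fin p) (Fin p) ℝ) (B : Matrix (Fin n) (Fin m) ℝ)
    (T : Matrix (Fin n) (Fin p) ℝ)
    (hQ : (-Q).PosDef)
    (h : ∀ v : Fin n → ℝ, Bᵀ.mulVec v = 0 → 0 ≤ v ⬝ᵥ (T * Q * Tᵀ).mulVec v) :
    (∀ v : Fin n → ℝ, Bᵀ.mulVec v = 0 → Tᵀ.mulVec v = 0) ∧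
      ∃ Δ : Matrix (Fin m) (Fin p) ℝ, T = B * Δ := by
  have key : ∀ v : Fin n → ℝ, Bᵀ.mulVec v = 0 → Tᵀ.mulVec v = 0 := by
    intro v hv
    by_contra hw
    set w := Tᵀ.mulVec v with hwdef
    have hpos := hQ.dotProduct_mulVec_pos hw
    have hrw : v ⬝ᵥ (T * Q * Tᵀ).mulVec v = w ⬝ᵥ Q.mulVec w := by
      rw [← Matrix.mulVec_mulVec, ← Matrix.mulVec_mulVec, Matrix.dotProduct_mulVec v T,
        ← Matrix.vecMul_transpose]
      congr 1
      rw [hwdef, ← Matrix.vecMul_transpose, Matrix.transpose_transpose]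
    have h0 := h v hv
    rw [hrw] at h0
    have : w ⬝ᵥ (-Q).mulVec w = -(w ⬝ᵥ Q.mulVec w) := by
      simp [Matrix.neg_mulVec]
    rw [star_trivial, this] at hpos
    linarith [hpos]
  refine ⟨key, ?_⟩
  -- factor Tᵀ through Bᵀ
  obtain ⟨hmap, hh⟩ := factor_through (Matrix.toLin' Bᵀ) (Matrix.toLin' Tᵀ)
    (by intro v hv
        simp only [LinearMap.mem_ker, Matrix.toLin'_apply] at *
        exact key v hv)
  refine ⟨(LinearMap.toMatrix' hmap)ᵀ, ?_⟩
  have : Tᵀ = (LinearMap.toMatrix' hmap) * Bᵀ := by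
    have := congrArg LinearMap.toMatrix' hh
    rwa [LinearMap.toMatrix'_toLin', LinearMap.toMatrix'_comp, LinearMap.toMatrix'_toLin'] at this
  calc T = Tᵀᵀ := (transpose_transpose T).symm
    _ = ((LinearMap.toMatrix' hmap) * Bᵀ)ᵀ := by rw [this]
    _ = B * (LinearMap.toMatrix' hmap)ᵀ := by rw [transpose_mul, transpose_transpose]
end
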